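/- Let ρ > 0 and θ ≥ ρ, let η ≥ 0, and let Ω : ℕ → ℝ and η̂ : ℕ → ℝ be sequences with Ω(t) ≥ 0 and 0 ≤ η̂(t) ≤ η for all t. Suppose that for all t ≥ 0, with τ(t) = 2/(ρt + 2θ): Ω(t+1) ≤ (1 − ρ·τ(t))·Ω(t) + τ(t)²·η̂(t). Then for every T ≥ 0: (θ/2)·Ω(T) ≤ (θ/(ρT + 2θ)) · ( 2η/ρ + θ·Ω(0) ). -/

import Mathlib

/-- Sequence-level optimality-gap bound: with learning rate `τ(t) = 2/(ρt + 2θ)`, the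
recursion `Ω(t+1) ≤ (1 - ρτ(t))Ω(t) + τ(t)²η̂(t)` yields
`(θ/2)Ω(T) ≤ (θ/(ρT + 2θ))(2η/ρ + θΩ(0))` for every `T`. -/
theorem sequence_optimality_gap (ρ θ η : ℝ) (hρ : 0 < ρ) (hθ : ρ ≤ θ) (hη : 0 ≤ η)
    (Om ηh : ℕ → ℝ) (hOm : ∀ t, 0 ≤ Om t)
    (hηh0 : ∀ t, 0 ≤ ηh t) (hηhη : ∀ t, ηh t ≤ η)
    (hrec : ∀ t : ℕ,
      Om (t + 1) ≤ (1 - ρ * (2 / (ρ * (t : ℝ) + 2 * θ))) * Om t +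
        (2 / (ρ * (t : ℝ) + 2 * θ)) ^ 2 * ηh t) :
    ∀ T : ℕ, θ / 2 * Om T ≤ θ / (ρ * (T : ℝ) + 2 * θ) * (2 * η / ρ + θ * Om 0) := by
  have hθ0 : 0 < θ := lt_of_lt_of_le hρ hθ
  obtain ⟨v, hv⟩ : ∃ v : ℝ, v = 4 * η / ρ + 2 * θ * Om 0 := ⟨_, rfl⟩
  have hv0 : 0 ≤ v := by
    have h1 := hOm 0
    have h2 : 0 ≤ 4 * η / ρ := by positivity
    have h3 : 0 ≤ 2 * θ * Om 0 := mul_nonneg (by positivity) h1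
    linarith
  have h4η : 4 * η ≤ ρ * v := by
    have : ρ * v = 4 * η + ρ * (2 * θ * Om 0) := by
      rw [hv]; field_simp
    nlinarith [mul_nonneg hρ.le (mul_nonneg (by positivity : (0:ℝ) ≤ 2 * θ) (hOm 0))]
  have key : ∀ T : ℕ, Om T ≤ v / (ρ * (T : ℝ) + 2 * θ) := by
    intro T
    induction T with
    | zero =>
      simp only [Nat.cast_zero, mul_zero, zero_add]
      rw [le_div_iff₀ (by positivity)]
      have h1 : 0 ≤ 4 * η / ρ := by positivity
      have h2 : Om 0 * (2 * θ) = 2 * θ * Om 0 := by ring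
      linarith
    | succ t ih =>
      have ha : 0 < ρ * (t : ℝ) + 2 * θ := by positivity
      set a : ℝ := ρ * (t : ℝ) + 2 * θ with hadef
      have ha2 : 2 * ρ ≤ a := by
        have := mul_nonneg hρ.le (Nat.cast_nonneg t : (0:ℝ) ≤ (t : ℝ))
        nlinarith
      have ih' : Om t * a ≤ v := (le_div_iff₀ ha).mp ih
      have hr := hrec t
      have h3 : (1 - ρ * (2 / a)) * Om t + (2 / a) ^ 2 * ηh t
          = ((a - 2 * ρ) * Om t * a + 4 * ηh t) / a ^ 2 := by
        field_simp
        ring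
      rw [h3] at hr
      have h2 : Om (t + 1) * a ^ 2 ≤ (a - 2 * ρ) * Om t * a + 4 * ηh t :=
        (le_div_iff₀ (by positivity)).mp hr
      have hcast : ρ * ((t : ℕ) + 1 : ℕ) + 2 * θ = a + ρ := by
        push_cast
        rw [hadef]
        ring
      rw [hcast, le_div_iff₀ (by positivity)]
      have haρ : 0 < a + ρ := by linarith
      have hA : Om (t + 1) * a ^ 2 ≤ (a - ρ) * v := by
        have hm := mul_le_mul_of_nonneg_left ih' (by linarith : (0:ℝ) ≤ a - 2 * ρ)
        have h4 := hηhη t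
        nlinarith
      have hB : Om (t + 1) * a ^ 2 * (a + ρ) ≤ (a - ρ) * v * (a + ρ) :=
        mul_le_mul_of_nonneg_right hA haρ.le
      have hkey : Om (t + 1) * (a + ρ) * a ^ 2 ≤ v * a ^ 2 := by
        nlinarith [mul_nonneg hv0 (sq_nonneg ρ)]
      have ha2' : 0 < a ^ 2 := by positivity
      exact le_of_mul_le_mul_right hkey ha2'
  intro T
  have hb : 0 < ρ * (T : ℝ) + 2 * θ := by positivity
  have heq : θ / (ρ * (T : ℝ) + 2 * θ) * (2 * η / ρ + θ * Om 0)
      = θ / 2 * (v / (ρ * (T : ℝ) + 2 * θ)) := by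
    rw [hv]
    field_simp
    ring
  rw [heq]
  have := key T
  nlinarith [key T, mul_le_mul_of_nonneg_left (key T) (by positivity : (0:ℝ) ≤ θ / 2)]
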